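/- Let f : Ω → ℍ be path-slice, γ ∈ 𝒫(ℂ,Ω), and I, J, K ∈ 𝕊(γ,Ω) with J ≠ K. Then for all t ∈ [0,1]: f(γ^I(t)) = (J-K)⁻¹(J·f(γ^J(t)) - K·f(γ^K(t))) + I·(J-K)⁻¹(f(γ^J(t)) - f(γ^K(t))). -/

import Mathlib

open scoped Quaternion

/-- Embedding of `ℂ` into the slice `ℂ_I` of the quaternions. -/
noncomputable def injC (I : ℍ[ℝ]) (z : ℂ) : ℍ[ℝ] := (z.re : ℍ[ℝ]) + z.im • I

/-- `𝕊(γ, Ω)`: the imaginary units `I` for which the lift `γ^I` stays in `Ω`. -/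
def sliceSet (Ω : Set ℍ[ℝ]) (γ : Set.Icc (0 : ℝ) 1 → ℂ) : Set ℍ[ℝ] :=
  {I | I ^ 2 = -1 ∧ ∀ t, injC I (γ t) ∈ Ω}

/-- `γ ∈ 𝒫(ℂ, Ω)`: a continuous path starting on `ℝ` whose lift `γ^I` lies in
`Ω` for some imaginary unit `I`. -/
def IsPathIn (Ω : Set ℍ[ℝ]) (γ : Set.Icc (0 : ℝ) 1 → ℂ) : Prop :=
  Continuous γ ∧ (γ ⟨0, by norm_num⟩).im = 0 ∧ (sliceSet Ω γ).Nonempty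

/-- `f` is path-slice: it has a path-slice stem function. -/
def IsPathSlice (Ω : Set ℍ[ℝ]) (f : ℍ[ℝ] → ℍ[ℝ]) : Prop :=
  ∃ F : (Set.Icc (0 : ℝ) 1 → ℂ) → ℍ[ℝ] × ℍ[ℝ],
    ∀ γ, IsPathIn Ω γ → ∀ I ∈ sliceSet Ω γ,
      f (injC I (γ ⟨1, by norm_num⟩)) = (F γ).1 + I * (F γ).2

/-- Representation formula along a path: if `f` is path-slice then for all
`I, J, K ∈ 𝕊(γ, Ω)` with `J ≠ K` and every `t ∈ [0,1]`,
`f(γ^I(t)) = (J-K)⁻¹(J f(γ^J(t)) - K f(γ^K(t))) + I (J-K)⁻¹(f(γ^J(t)) - f(γ^K(t)))`. -/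
theorem pathSlice_representation (Ω : Set ℍ[ℝ]) (f : ℍ[ℝ] → ℍ[ℝ])
    (hf : IsPathSlice Ω f) (γ : Set.Icc (0 : ℝ) 1 → ℂ) (hγ : IsPathIn Ω γ)
    (I J K : ℍ[ℝ]) (hI : I ∈ sliceSet Ω γ) (hJ : J ∈ sliceSet Ω γ)
    (hK : K ∈ sliceSet Ω γ) (hJK : J ≠ K) (t : Set.Icc (0 : ℝ) 1) :
    f (injC I (γ t)) =
      (J - K)⁻¹ * (J * f (injC J (γ t)) - K * f (injC K (γ t))) +
        I * ((J - K)⁻¹ * (f (injC J (γ t)) - f (injC K (γ t)))) := by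
  obtain ⟨F, hF⟩ := hf
  -- reparametrized path ending at γ t
  set γ' : Set.Icc (0 : ℝ) 1 → ℂ := fun s =>
    γ ⟨(t : ℝ) * s, ⟨mul_nonneg t.2.1 s.2.1, mul_le_one₀ t.2.2 s.2.1 s.2.2⟩⟩ with hγ'def
  have hend : γ' ⟨1, by norm_num⟩ = γ t := by
    simp only [hγ'def]
    congr 1
    exact Subtype.ext (mul_one _)
  have hsub : ∀ L : ℍ[ℝ], L ∈ sliceSet Ω γ → L ∈ sliceSet Ω γ' := by
    intro L hL
    exact ⟨hL.1, fun s => hL.2 _⟩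
  have hI' := hsub I hI
  have hJ' := hsub J hJ
  have hK' := hsub K hK
  have hcont : Continuous γ' := by
    apply hγ.1.comp
    exact Continuous.subtype_mk (continuous_const.mul continuous_subtype_val) _
  have hstart : (γ' ⟨0, by norm_num⟩).im = 0 := by
    have : γ' ⟨0, by norm_num⟩ = γ ⟨0, by norm_num⟩ := by
      simp only [hγ'def]
      congr 1
      exact Subtype.ext (mul_zero _)
    rw [this]; exact hγ.2.1
  have hp : IsPathIn Ω γ' := ⟨hcont, hstart, ⟨I, hI'⟩⟩
  have h1 := hF γ' hp I hI'
  have h2 := hF γ' hp J hJ'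
  have h3 := hF γ' hp K hK'
  rw [hend] at h1 h2 h3
  set a := (F γ').1
  set b := (F γ').2
  rw [h1, h2, h3]
  have hJ2 : J * J = -1 := by have := hJ.1; rwa [sq] at this
  have hK2 : K * K = -1 := by have := hK.1; rwa [sq] at this
  have hne : J - K ≠ 0 := sub_ne_zero.mpr hJK
  have e1 : J * (a + J * b) - K * (a + K * b) = (J - K) * a := by
    rw [mul_add, mul_add, ← mul_assoc, ← mul_assoc, hJ2, hK2, sub_mul]
    simp only [neg_one_mul]
    abel
  have e2 : (a + J * b) - (a + K * b) = (J - K) * b := by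
    rw [sub_mul]; abel
  rw [e1, e2, inv_mul_cancel_left₀ hne, inv_mul_cancel_left₀ hne]
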